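/- (Rank preservation of the posterior-covariance update.) Let X be a real symmetric positive semidefinite n×n matrix, h ∈ ℝⁿ, and σ > 0. Define Y = X − X h hᵀ X/(hᵀ X h + σ²). Then ker(Y) = ker(X); in particular rank(Y) = rank(X). -/

import Mathlib

open MeasureTheory ProbabilityTheory Matrix BigOperators

/-- Spectral (ℓ²-operator) norm of a real square matrix. -/
noncomputable def specNorm {n : ℕ} (A : Matrix (Fin n) (Fin n) ℝ) : ℝ :=
  ‖LinearMap.toContinuousLinearMap (Matrix.toEuclideanLin A)‖

/-- The posterior-covariance update `Y = X − X h hᵀ X/(hᵀXh + σ²)` of a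
positive semidefinite matrix `X` has the same kernel (and hence the same rank) as `X`. -/
theorem stmt8 {n : ℕ} (X : Matrix (Fin n) (Fin n) ℝ) (hX : X.PosSemidef)
    (h : Fin n → ℝ) (σ : ℝ) (hσ : 0 < σ)
    (Y : Matrix (Fin n) (Fin n) ℝ)
    (hY : Y = X - (h ⬝ᵥ X.mulVec h + σ ^ 2)⁻¹ • Matrix.vecMulVec (X.mulVec h) (X.vecMul h)) :
    LinearMap.ker Y.mulVecLin = LinearMap.ker X.mulVecLin ∧ Y.rank = X.rank := by
  set a := h ⬝ᵥ X.mulVec h with ha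
  have ha0 : 0 ≤ a := by
    have := hX.dotProduct_mulVec_nonneg h
    simpa using this
  have hc : a + σ ^ 2 ≠ 0 := by positivity
  have key : ∀ v, Y.mulVec v =
      X.mulVec v - ((a + σ ^ 2)⁻¹ * (h ⬝ᵥ X.mulVec v)) • X.mulVec h := by
    intro v
    subst hY
    funext i
    simp only [sub_mulVec, smul_mulVec, Pi.sub_apply, Pi.smul_apply, smul_eq_mul]
    congr 1
    have : (Matrix.vecMulVec (X.mulVec h) (X.vecMul h)).mulVec v i
        = (X.mulVec h i) * ((X.vecMul h) ⬝ᵥ v) := by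
      simp [Matrix.mulVec, Matrix.vecMulVec, dotProduct, Finset.mul_sum, mul_assoc]
    rw [this, ← dotProduct_mulVec]
    ring
  have hker : LinearMap.ker Y.mulVecLin = LinearMap.ker X.mulVecLin := by
    ext v
    simp only [LinearMap.mem_ker, Matrix.mulVecLin_apply]
    constructor
    · intro hv
      rw [key v] at hv
      have hv' : X.mulVec v = ((a + σ ^ 2)⁻¹ * (h ⬝ᵥ X.mulVec v)) • X.mulVec h := by
        rwa [sub_eq_zero] at hv
      set t := h ⬝ᵥ X.mulVec v with ht
      have h2 : t = (a + σ ^ 2)⁻¹ * t * a := by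
        calc t = h ⬝ᵥ X.mulVec v := ht
          _ = h ⬝ᵥ (((a + σ ^ 2)⁻¹ * t) • X.mulVec h) := by rw [← hv']
          _ = (a + σ ^ 2)⁻¹ * t * a := by
              rw [dotProduct_smul, smul_eq_mul]
      have ht0 : t = 0 := by
        have h3 : t * (a + σ ^ 2) = t * a := by
          conv_lhs => rw [h2]
          field_simp
        have h4 : t * σ ^ 2 = 0 := by ring_nf; ring_nf at h3; linarith
        have hσ2 : σ ^ 2 ≠ 0 := by positivity
        exact (mul_eq_zero.mp h4).resolve_right hσ2
      rw [ht0] at hv'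
      simpa using hv'
    · intro hv
      rw [key v, hv]
      simp
  refine ⟨hker, ?_⟩
  have h1 := LinearMap.finrank_range_add_finrank_ker Y.mulVecLin
  have h2 := LinearMap.finrank_range_add_finrank_ker X.mulVecLin
  have hrank : Y.rank = Module.finrank ℝ (LinearMap.range Y.mulVecLin) := rfl
  have hrank2 : X.rank = Module.finrank ℝ (LinearMap.range X.mulVecLin) := rfl
  rw [hrank, hrank2]
  rw [hker] at h1
  omega
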